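/- Let a > 0, t > 0 and let n ≥ 1 be an integer. Then t^{a−1}(1+t)^{−a} − Σ_{k=0}^{n−1} (−1)^k (a)_k/(k!·t^{k+1}) = ((−1)^n (a)_n/(t^{n+1}·(n−1)!))·∫_0^1 (1−s)^{n−1}(1+s/t)^{−(n+a)} ds. In particular, this quantity has sign (−1)^n. -/

import Mathlib

open Real

/-- Rising factorial (Pochhammer symbol) `(a)_k`. -/
noncomputable def poch (a : ℝ) (k : ℕ) : ℝ := (ascPochhammer ℝ k).eval a

lemma poch_zero (a : ℝ) : poch a 0 = 1 := by simp [poch]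

lemma poch_succ (a : ℝ) (n : ℕ) : poch a (n+1) = poch a n * (a + n) := by
  simp [poch, ascPochhammer_succ_right]

lemma poch_pos {a : ℝ} (ha : 0 < a) (n : ℕ) : 0 < poch a n := by
  induction n with
  | zero => simp [poch_zero]
  | succ n ih =>
    rw [poch_succ]
    exact mul_pos ih (add_pos_of_pos_of_nonneg ha (Nat.cast_nonneg n))

lemma integ {t : ℝ} (ht : 0 < t) (m : ℕ) (c : ℝ) :
    IntervalIntegrable (fun s : ℝ => (1 - s) ^ m * (1 + s / t) ^ (-c))
      MeasureTheory.volume 0 1 := by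
  apply ContinuousOn.intervalIntegrable
  rw [Set.uIcc_of_le zero_le_one]
  apply ContinuousOn.mul
  · exact (Continuous.pow (by continuity) m).continuousOn
  · apply ContinuousOn.rpow_const
    · exact (by continuity : Continuous fun s : ℝ => 1 + s/t).continuousOn
    · intro x hx
      have : 0 < 1 + x / t := by
        have := hx.1
        positivity
      exact Or.inl (ne_of_gt this)

lemma deriv_aux {t : ℝ} (ht : 0 < t) (m : ℕ) (c : ℝ) {s : ℝ} (hs : 0 ≤ s) :
    HasDerivAt (fun s : ℝ => -((1 - s) ^ (m+1) * (1 + s / t) ^ (-c)))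
      ((m+1 : ℝ) * ((1 - s) ^ m * (1 + s / t) ^ (-c))
        + (c / t) * ((1 - s) ^ (m+1) * (1 + s / t) ^ (-(c+1)))) s := by
  have hb : 0 < 1 + s / t := by positivity
  have h1 : HasDerivAt (fun s : ℝ => (1 - s) ^ (m+1)) (((m:ℝ)+1) * (1-s)^m * (-1)) s := by
    have := ((hasDerivAt_id s).const_sub 1).fun_pow (m+1)
    simpa using this
  have hbder : HasDerivAt (fun s : ℝ => 1 + s / t) (1/t) s := by
    simpa using ((hasDerivAt_id s).div_const t).const_add 1
  have h2 : HasDerivAt (fun s : ℝ => (1 + s / t) ^ (-c))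
      (1/t * (-c) * (1 + s/t) ^ (-c-1)) s :=
    hbder.rpow_const (Or.inl (ne_of_gt hb))
  have h3 := (h1.fun_mul h2).fun_neg
  have he : (1 + s/t) ^ (-c-1) = (1 + s/t) ^ (-(c+1)) := by ring_nf
  rw [he] at h3
  refine h3.congr_deriv ?_
  ring

lemma key {t : ℝ} (ht : 0 < t) (m : ℕ) (c : ℝ) :
    (m+1 : ℝ) * (∫ s in (0:ℝ)..1, (1 - s) ^ m * (1 + s / t) ^ (-c))
      + (c / t) * (∫ s in (0:ℝ)..1, (1 - s) ^ (m+1) * (1 + s / t) ^ (-(c+1))) = 1 := by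
  have h := intervalIntegral.integral_eq_sub_of_hasDerivAt
    (f := fun s : ℝ => -((1 - s) ^ (m+1) * (1 + s / t) ^ (-c)))
    (f' := fun s : ℝ => (m+1 : ℝ) * ((1 - s) ^ m * (1 + s / t) ^ (-c))
        + (c / t) * ((1 - s) ^ (m+1) * (1 + s / t) ^ (-(c+1))))
    (fun x hx => by
      rw [Set.uIcc_of_le zero_le_one] at hx
      exact deriv_aux ht m c hx.1)
    (((integ ht m c).const_mul _).add ((integ ht (m+1) (c+1)).const_mul _))
  rw [intervalIntegral.integral_add ((integ ht m c).const_mul _)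
      ((integ ht (m+1) (c+1)).const_mul _),
    intervalIntegral.integral_const_mul, intervalIntegral.integral_const_mul] at h
  rw [h]
  norm_num

lemma base_int {a t : ℝ} (ha : 0 < a) (ht : 0 < t) :
    ∫ s in (0:ℝ)..1, (1 - s) ^ 0 * (1 + s / t) ^ (-(1+a)) =
      (t/a) * (1 - (1+1/t) ^ (-a)) := by
  have h := intervalIntegral.integral_eq_sub_of_hasDerivAt
    (f := fun s : ℝ => -(t/a) * (1 + s / t) ^ (-a))
    (f' := fun s : ℝ => (1 - s) ^ 0 * (1 + s / t) ^ (-(1+a)))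
    (fun x hx => by
      rw [Set.uIcc_of_le zero_le_one] at hx
      have hb : 0 < 1 + x / t := by have := hx.1; positivity
      have hbder : HasDerivAt (fun s : ℝ => 1 + s / t) (1/t) x := by
        simpa using ((hasDerivAt_id x).div_const t).const_add 1
      have h2 := (hbder.rpow_const (p := -a) (Or.inl (ne_of_gt hb))).const_mul (-(t/a))
      refine h2.congr_deriv ?_
      simp only [pow_zero, one_mul]
      have : (1 + x/t) ^ (-(1+a)) = (1 + x/t) ^ (-a-1) := by ring_nf
      rw [this]
      field_simp)
    (integ ht 0 (1+a))
  rw [h]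
  norm_num
  ring

lemma T_eq {t : ℝ} (ht : 0 < t) (a : ℝ) :
    t ^ (a-1) * (1+t) ^ (-a) = (1/t) * (1+1/t) ^ (-a) := by
  have h1 : (1:ℝ) + 1/t = (1+t)/t := by field_simp; ring
  rw [h1, Real.div_rpow (by positivity) (le_of_lt ht), Real.rpow_sub ht, Real.rpow_one,
      Real.rpow_neg (le_of_lt ht)]
  have h2 : (t:ℝ) ^ a ≠ 0 := (Real.rpow_pos_of_pos ht a).ne'
  field_simp

lemma I_pos {t : ℝ} (ht : 0 < t) (m : ℕ) (c : ℝ) :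
    0 < ∫ s in (0:ℝ)..1, (1 - s) ^ m * (1 + s / t) ^ (-c) := by
  apply intervalIntegral.intervalIntegral_pos_of_pos_on (integ ht m c) _ zero_lt_one
  intro x hx
  have h1 : 0 < 1 - x := by linarith [hx.2]
  have h2 : 0 < 1 + x / t := by have := hx.1.le; positivity
  exact mul_pos (pow_pos h1 m) (Real.rpow_pos_of_pos h2 _)

lemma main_eq {a t : ℝ} (ha : 0 < a) (ht : 0 < t) (m : ℕ) :
    t ^ (a - 1) * (1 + t) ^ (-a) -
        ∑ k ∈ Finset.range (m+1), (-1 : ℝ) ^ k * poch a k / ((Nat.factorial k : ℝ) * t ^ (k + 1)) =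
      ((-1 : ℝ) ^ (m+1) * poch a (m+1) / (t ^ (m+1+1) * (Nat.factorial m : ℝ))) *
        ∫ s in (0 : ℝ)..1, (1 - s) ^ m * (1 + s / t) ^ (-(((m:ℝ) + 1) + a)) := by
  induction m with
  | zero =>
    have he : -(((0:ℕ):ℝ) + 1 + a) = -(1+a) := by norm_num
    simp only [he]
    rw [base_int ha ht, T_eq ht a]
    simp [Finset.sum_range_one, poch_zero, poch_succ]
    field_simp
    ring
  | succ m ih =>
    rw [Finset.sum_range_succ, ← sub_sub, ih]
    have hkey := key ht m (((m:ℝ)+1)+a)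
    have he : -((((m:ℝ) + 1) + a) + 1) = -((((m+1:ℕ):ℝ)) + 1 + a) := by push_cast; ring
    rw [he] at hkey
    set I1 := ∫ s in (0:ℝ)..1, (1 - s) ^ m * (1 + s / t) ^ (-(((m:ℝ) + 1) + a)) with hI1
    set I2 := ∫ s in (0:ℝ)..1, (1 - s) ^ (m+1) * (1 + s / t) ^ (-((((m+1:ℕ):ℝ)) + 1 + a)) with hI2
    rw [poch_succ a (m+1), Nat.factorial_succ]
    have hfac : (Nat.factorial m : ℝ) ≠ 0 := Nat.cast_ne_zero.2 (Nat.factorial_ne_zero m)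
    have hc : ((m:ℝ) + 1) + a ≠ 0 := by positivity
    have htne : t ≠ 0 := ht.ne'
    have hI2eq : I2 = (t / (((m:ℝ)+1)+a)) * (1 - ((m:ℝ)+1) * I1) := by
      field_simp at hkey ⊢
      linarith [hkey]
    rw [hI2eq]
    push_cast
    field_simp
    ring

/-- integral representation for the tail of the asymptotic expansion of
`t^{a-1}(1+t)^{-a}` and its sign. -/
theorem f_tail_integral (a t : ℝ) (n : ℕ) (ha : 0 < a) (ht : 0 < t) (hn : 1 ≤ n) :
    t ^ (a - 1) * (1 + t) ^ (-a) -
        ∑ k ∈ Finset.range n, (-1 : ℝ) ^ k * poch a k / ((Nat.factorial k : ℝ) * t ^ (k + 1)) =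
      ((-1 : ℝ) ^ n * poch a n / (t ^ (n + 1) * (Nat.factorial (n - 1) : ℝ))) *
        ∫ s in (0 : ℝ)..1, (1 - s) ^ (n - 1) * (1 + s / t) ^ (-((n : ℝ) + a)) ∧
    0 < (-1 : ℝ) ^ n *
      (t ^ (a - 1) * (1 + t) ^ (-a) -
        ∑ k ∈ Finset.range n, (-1 : ℝ) ^ k * poch a k / ((Nat.factorial k : ℝ) * t ^ (k + 1))) := by
  obtain ⟨m, rfl⟩ : ∃ m, n = m + 1 := ⟨n - 1, (Nat.succ_pred_eq_of_pos hn).symm⟩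
  have he : -(((m+1:ℕ):ℝ) + a) = -(((m:ℝ) + 1) + a) := by push_cast; ring
  have hE := main_eq ha ht m
  simp only [Nat.add_sub_cancel, he]
  constructor
  · exact hE
  · rw [hE]
    have h4 : ((-1:ℝ))^(m+1) * (-1:ℝ)^(m+1) = 1 := by
      rw [← pow_add]
      exact Even.neg_one_pow ⟨m+1, by ring⟩
    set I := ∫ s in (0 : ℝ)..1, (1 - s) ^ m * (1 + s / t) ^ (-(((m:ℝ) + 1) + a)) with hI
    have hfacpos : (0:ℝ) < (Nat.factorial m : ℝ) := Nat.cast_pos.2 (Nat.factorial_pos m)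
    have hpos : 0 < (poch a (m+1) / (t ^ (m+1+1) * (Nat.factorial m : ℝ))) * I :=
      mul_pos (div_pos (poch_pos ha _) (mul_pos (pow_pos ht _) hfacpos)) (I_pos ht m _)
    have heq : (-1:ℝ)^(m+1) * (((-1:ℝ)^(m+1) * poch a (m+1) /
          (t ^ (m+1+1) * (Nat.factorial m : ℝ))) * I) =
        (poch a (m+1) / (t ^ (m+1+1) * (Nat.factorial m : ℝ))) * I := by
      have hd : (t ^ (m+1+1) * (Nat.factorial m : ℝ)) ≠ 0 :=
        (mul_pos (pow_pos ht _) hfacpos).ne'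
      field_simp
      linear_combination (poch a (m+1) * I) * h4
    rw [heq]
    exact hpos
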